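/- For x > 0 let C_x = diag(x, 1, 1, 1/x) ∈ SL(4,ℝ). Then: (i) C_x·Ω(1,2π/3)·C_x⁻¹ = Ω(1,2π/3) for all x > 0; and (ii) C_x·M(1,0)·C_x⁻¹ tends to the identity matrix I₄ as x → 0⁺. Consequently, if ρ_hyp : Γ → SL(4,ℝ) is a homomorphism with ρ_hyp(a) = Ω(1,2π/3) and ρ_hyp(a²b) = M(1,0), and ρ_red : Γ → SL(4,ℝ) is the homomorphism with ρ_red(a) = Ω(1,2π/3) and ρ_red(a²b) = I₄, then for every γ ∈ Γ, C_x·ρ_hyp(γ)·C_x⁻¹ tends to ρ_red(γ) as x → 0⁺. -/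

import Mathlib

open Matrix Real Filter Topology

/-- The relations of the turnover group `Γ = ⟨a, b ∣ a³ = b³ = (ab)³ = 1⟩`. -/
def turnoverRels : Set (FreeGroup (Fin 2)) :=
  {FreeGroup.of 0 ^ 3, FreeGroup.of 1 ^ 3, (FreeGroup.of 0 * FreeGroup.of 1) ^ 3}

/-- The orbifold fundamental group of the Euclidean turnover `S²(3,3,3)`. -/
abbrev TurnoverGroup : Type := PresentedGroup turnoverRels

/-- The generator `a` of `Γ`. -/
def ga : TurnoverGroup := PresentedGroup.of 0

/-- The generator `b` of `Γ`. -/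
def gb : TurnoverGroup := PresentedGroup.of 1

/-- The matrix `M(x,y)` from the `C₀`-type generalized cusp. -/
noncomputable def Mcusp (x y : ℝ) : Matrix (Fin 4) (Fin 4) ℝ :=
  !![1, x, y, (x ^ 2 + y ^ 2) / 2;
     0, 1, 0, x;
     0, 0, 1, y;
     0, 0, 0, 1]

/-- The similarity `Ω(1, 2π/3) = diag(1, R, 1)` with `R` the rotation of angle `2π/3`. -/
noncomputable def Omega : Matrix (Fin 4) (Fin 4) ℝ :=
  !![1, 0, 0, 0;
     0, cos (2 * π / 3), -sin (2 * π / 3), 0;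
     0, sin (2 * π / 3), cos (2 * π / 3), 0;
     0, 0, 0, 1]

/-- The degeneration family `C_x = diag(x, 1, 1, 1/x)`. -/
noncomputable def Cdeg (x : ℝ) : Matrix (Fin 4) (Fin 4) ℝ :=
  !![x, 0, 0, 0;
     0, 1, 0, 0;
     0, 0, 1, 0;
     0, 0, 0, 1 / x]

/-- The inverse family `C_x⁻¹ = diag(1/x, 1, 1, x)`. -/
noncomputable def CdegInv (x : ℝ) : Matrix (Fin 4) (Fin 4) ℝ :=
  !![1 / x, 0, 0, 0;
     0, 1, 0, 0;
     0, 0, 1, 0;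
     0, 0, 0, x]

/-- `C_x C_x⁻¹ = 1` for `x ≠ 0`. -/
theorem Cdeg_mul_CdegInv {x : ℝ} (hx : x ≠ 0) : Cdeg x * CdegInv x = 1 := by
  ext i j
  fin_cases i <;> fin_cases j <;>
    simp [Cdeg, CdegInv, Matrix.mul_apply, Fin.sum_univ_four, Matrix.one_apply,
      Matrix.vecHead, Matrix.vecTail, hx]

/-- `C_x⁻¹ C_x = 1` for `x ≠ 0`. -/
theorem CdegInv_mul_Cdeg {x : ℝ} (hx : x ≠ 0) : CdegInv x * Cdeg x = 1 := by
  ext i j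
  fin_cases i <;> fin_cases j <;>
    simp [Cdeg, CdegInv, Matrix.mul_apply, Fin.sum_univ_four, Matrix.one_apply,
      Matrix.vecHead, Matrix.vecTail, hx]

/-- Conjugation by `C_x` fixes `Ω`. -/
theorem Cdeg_conj_Omega {x : ℝ} (hx : x ≠ 0) : Cdeg x * Omega * CdegInv x = Omega := by
  ext i j
  fin_cases i <;> fin_cases j <;>
    simp [Cdeg, CdegInv, Omega, Matrix.mul_apply, Fin.sum_univ_four,
      Matrix.vecHead, Matrix.vecTail, hx]

/-- `det C_x = 1` for `x ≠ 0`. -/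
theorem Cdeg_det {x : ℝ} (hx : x ≠ 0) : (Cdeg x).det = 1 := by
  simp [Cdeg, Matrix.det_succ_row_zero, Fin.sum_univ_succ, hx]

/-- The explicit conjugated matrix `C_x M(1,0) C_x⁻¹`. -/
noncomputable def Fdeg (x : ℝ) : Matrix (Fin 4) (Fin 4) ℝ :=
  !![1, x, 0, x ^ 2 / 2; 0, 1, 0, x; 0, 0, 1, 0; 0, 0, 0, 1]

theorem Cdeg_conj_Mcusp {x : ℝ} (hx : x ≠ 0) : Cdeg x * Mcusp 1 0 * CdegInv x = Fdeg x := by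
  ext i j
  fin_cases i <;> fin_cases j <;>
    (simp [Cdeg, CdegInv, Mcusp, Fdeg, Matrix.mul_apply, Fin.sum_univ_four,
      Matrix.vecHead, Matrix.vecTail, hx]; try ring)

theorem tendsto_Fdeg : Tendsto Fdeg (𝓝[>] 0) (𝓝 (1 : Matrix (Fin 4) (Fin 4) ℝ)) := by
  have hc : Continuous Fdeg := by
    apply continuous_matrix
    intro i j
    fin_cases i <;> fin_cases j <;>
      simp [Fdeg, Matrix.vecHead, Matrix.vecTail] <;> fun_prop
  have h0 : Fdeg 0 = 1 := by
    ext i j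
    fin_cases i <;> fin_cases j <;>
      simp [Fdeg, Matrix.one_apply, Matrix.vecHead, Matrix.vecTail]
  have h := hc.continuousAt (x := (0 : ℝ))
  rw [ContinuousAt, h0] at h
  exact h.mono_left nhdsWithin_le_nhds

theorem tendsto_conj_Mcusp :
    Tendsto (fun x : ℝ => Cdeg x * Mcusp 1 0 * CdegInv x) (𝓝[>] 0)
      (𝓝 (1 : Matrix (Fin 4) (Fin 4) ℝ)) := by
  refine tendsto_Fdeg.congr' ?_
  filter_upwards [self_mem_nhdsWithin] with x hx
  exact (Cdeg_conj_Mcusp (ne_of_gt hx)).symm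

theorem ga_cube : ga ^ 3 = 1 := by
  have h : (FreeGroup.of (0 : Fin 2)) ^ 3 ∈ Subgroup.normalClosure turnoverRels :=
    Subgroup.subset_normalClosure (by simp [turnoverRels])
  have h1 : PresentedGroup.mk turnoverRels ((FreeGroup.of 0) ^ 3) = 1 :=
    (QuotientGroup.eq_one_iff _).mpr h
  simpa [ga, PresentedGroup.of, map_pow] using h1

theorem gb_cube : gb ^ 3 = 1 := by
  have h : (FreeGroup.of (1 : Fin 2)) ^ 3 ∈ Subgroup.normalClosure turnoverRels :=
    Subgroup.subset_normalClosure (by simp [turnoverRels])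
  have h1 : PresentedGroup.mk turnoverRels ((FreeGroup.of 1) ^ 3) = 1 :=
    (QuotientGroup.eq_one_iff _).mpr h
  simpa [gb, PresentedGroup.of, map_pow] using h1

theorem turnover_induction (P : TurnoverGroup → Prop) (h1 : P 1) (ha : P ga) (hb : P gb)
    (hmul : ∀ γ δ, P γ → P δ → P (γ * δ)) : ∀ γ, P γ := by
  have hinva : P ga⁻¹ := by
    have h : ga⁻¹ = ga * ga := by
      apply inv_eq_of_mul_eq_one_right
      have h2 : ga * (ga * ga) = ga ^ 3 := by rw [pow_succ, pow_succ, pow_one, mul_assoc]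
      rw [h2, ga_cube]
    rw [h]; exact hmul _ _ ha ha
  have hinvb : P gb⁻¹ := by
    have h : gb⁻¹ = gb * gb := by
      apply inv_eq_of_mul_eq_one_right
      have h2 : gb * (gb * gb) = gb ^ 3 := by rw [pow_succ, pow_succ, pow_one, mul_assoc]
      rw [h2, gb_cube]
    rw [h]; exact hmul _ _ hb hb
  intro γ
  induction γ using QuotientGroup.induction_on with
  | H w =>
    induction w using FreeGroup.induction_on with
    | C1 => exact h1
    | of x =>
        fin_cases x
        · exact ha
        · exact hb
    | inv_of x hx =>
        rw [QuotientGroup.mk_inv]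
        fin_cases x
        · exact hinva
        · exact hinvb
    | mul x y hx hy =>
        rw [QuotientGroup.mk_mul]
        exact hmul _ _ hx hy

/-- Conjugating by `C_x = diag(x,1,1,1/x)` fixes `Ω(1,2π/3)` and degenerates `M(1,0)` to
the identity as `x → 0⁺`; consequently the reducible representation `ρ_red` lies in the
closure of the conjugation orbit of the hyperbolic holonomy `ρ_hyp`. -/
theorem degeneration_to_reducible :
    (∀ x : ℝ, 0 < x → (Cdeg x).det = 1 ∧ Cdeg x * CdegInv x = 1 ∧
        Cdeg x * Omega * CdegInv x = Omega) ∧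
    Tendsto (fun x : ℝ => Cdeg x * Mcusp 1 0 * CdegInv x) (𝓝[>] 0)
      (𝓝 (1 : Matrix (Fin 4) (Fin 4) ℝ)) ∧
    ∀ ρhyp ρred : TurnoverGroup →* Matrix.SpecialLinearGroup (Fin 4) ℝ,
      (ρhyp ga : Matrix (Fin 4) (Fin 4) ℝ) = Omega →
      (ρhyp (ga ^ 2 * gb) : Matrix (Fin 4) (Fin 4) ℝ) = Mcusp 1 0 →
      (ρred ga : Matrix (Fin 4) (Fin 4) ℝ) = Omega →
      (ρred (ga ^ 2 * gb) : Matrix (Fin 4) (Fin 4) ℝ) = 1 →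
      ∀ γ : TurnoverGroup,
        Tendsto (fun x : ℝ => Cdeg x * (ρhyp γ : Matrix (Fin 4) (Fin 4) ℝ) * CdegInv x)
          (𝓝[>] 0) (𝓝 (ρred γ : Matrix (Fin 4) (Fin 4) ℝ)) := by
  refine ⟨fun x hx => ⟨Cdeg_det hx.ne', Cdeg_mul_CdegInv hx.ne', Cdeg_conj_Omega hx.ne'⟩,
    tendsto_conj_Mcusp, ?_⟩
  intro ρhyp ρred ha hab ha' hab'
  let P : TurnoverGroup → Prop := fun γ =>
    Tendsto (fun x : ℝ => Cdeg x * (ρhyp γ : Matrix (Fin 4) (Fin 4) ℝ) * CdegInv x)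
      (𝓝[>] 0) (𝓝 (ρred γ : Matrix (Fin 4) (Fin 4) ℝ))
  -- multiplicativity of the property
  have hmul : ∀ γ δ, P γ → P δ → P (γ * δ) := by
    intro γ δ hγ hδ
    show Tendsto (fun x : ℝ => Cdeg x * (ρhyp (γ * δ) : Matrix (Fin 4) (Fin 4) ℝ) * CdegInv x)
      (𝓝[>] 0) (𝓝 (ρred (γ * δ) : Matrix (Fin 4) (Fin 4) ℝ))
    have hlim : Tendsto
        (fun x : ℝ => (Cdeg x * (ρhyp γ : Matrix (Fin 4) (Fin 4) ℝ) * CdegInv x) *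
          (Cdeg x * (ρhyp δ : Matrix (Fin 4) (Fin 4) ℝ) * CdegInv x)) (𝓝[>] 0)
        (𝓝 ((ρred γ : Matrix (Fin 4) (Fin 4) ℝ) * (ρred δ : Matrix (Fin 4) (Fin 4) ℝ))) :=
      Tendsto.mul hγ hδ
    have heq : (ρred (γ * δ) : Matrix (Fin 4) (Fin 4) ℝ) =
        (ρred γ : Matrix (Fin 4) (Fin 4) ℝ) * (ρred δ : Matrix (Fin 4) (Fin 4) ℝ) := by
      rw [_root_.map_mul]; rfl
    rw [heq]
    refine hlim.congr' ?_
    filter_upwards [self_mem_nhdsWithin] with x hx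
    have h1 : CdegInv x * Cdeg x = 1 := CdegInv_mul_Cdeg (ne_of_gt hx)
    have h2 : (ρhyp (γ * δ) : Matrix (Fin 4) (Fin 4) ℝ) =
        (ρhyp γ : Matrix (Fin 4) (Fin 4) ℝ) * (ρhyp δ : Matrix (Fin 4) (Fin 4) ℝ) := by
      rw [_root_.map_mul]; rfl
    rw [h2, show (ρhyp γ : Matrix (Fin 4) (Fin 4) ℝ) * (ρhyp δ : Matrix (Fin 4) (Fin 4) ℝ) =
      (ρhyp γ : Matrix (Fin 4) (Fin 4) ℝ) * ((CdegInv x * Cdeg x) *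
        (ρhyp δ : Matrix (Fin 4) (Fin 4) ℝ)) by rw [h1, one_mul]]
    simp only [Matrix.mul_assoc]
  -- the property holds at 1
  have h1 : P 1 := by
    show Tendsto (fun x : ℝ => Cdeg x * (ρhyp (1 : TurnoverGroup) : Matrix (Fin 4) (Fin 4) ℝ) *
      CdegInv x) (𝓝[>] 0) (𝓝 (ρred (1 : TurnoverGroup) : Matrix (Fin 4) (Fin 4) ℝ))
    have heq : (ρred (1 : TurnoverGroup) : Matrix (Fin 4) (Fin 4) ℝ) = 1 := by
      rw [_root_.map_one]; rfl
    rw [heq]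
    refine tendsto_const_nhds.congr' ?_
    filter_upwards [self_mem_nhdsWithin] with x hx
    have h2 : (ρhyp (1 : TurnoverGroup) : Matrix (Fin 4) (Fin 4) ℝ) = 1 := by
      rw [_root_.map_one]; rfl
    rw [h2, Matrix.mul_one, Cdeg_mul_CdegInv (ne_of_gt hx)]
  -- the property holds at ga
  have hga : P ga := by
    show Tendsto (fun x : ℝ => Cdeg x * (ρhyp ga : Matrix (Fin 4) (Fin 4) ℝ) * CdegInv x)
      (𝓝[>] 0) (𝓝 (ρred ga : Matrix (Fin 4) (Fin 4) ℝ))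
    rw [ha, ha']
    refine tendsto_const_nhds.congr' ?_
    filter_upwards [self_mem_nhdsWithin] with x hx
    exact (Cdeg_conj_Omega (ne_of_gt hx)).symm
  -- the property holds at ga^2 * gb
  have hgab : P (ga ^ 2 * gb) := by
    show Tendsto (fun x : ℝ => Cdeg x * (ρhyp (ga ^ 2 * gb) : Matrix (Fin 4) (Fin 4) ℝ) *
      CdegInv x) (𝓝[>] 0) (𝓝 (ρred (ga ^ 2 * gb) : Matrix (Fin 4) (Fin 4) ℝ))
    rw [hab, hab']
    exact tendsto_conj_Mcusp
  -- hence at gb = ga * (ga^2 * gb)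
  have hgb : P gb := by
    have h : gb = ga * (ga ^ 2 * gb) := by
      rw [← mul_assoc, (pow_succ' ga 2).symm, ga_cube, one_mul]
    rw [h]
    exact hmul _ _ hga hgab
  exact turnover_induction P h1 hga hgb hmul
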